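/- Let J be a convex polytope in ℝ^d and I a convex polytope whose extreme points lie in ℤ^d, with 0 ∈ I. Then the number of lattice points in the inner boundary ∂⁻_I J = J \ (J ⊖ I) is at most the number of lattice points in the outer boundary ∂⁺_I J = (J ⊕ I) \ J. -/

import Mathlib

open Set Pointwise

/-- The lattice points: points of `ℝ^d` with all coordinates integers. -/
def IsLatticePt {d : ℕ} (x : EuclideanSpace ℝ (Fin d)) : Prop :=
  ∀ i, ∃ n : ℤ, x i = (n : ℝ)

/-- Erosion `J ⊖ I = {x | ∀ i ∈ I, x + i ∈ J}`. -/
def erode {d : ℕ} (J I : Set (EuclideanSpace ℝ (Fin d))) : Set (EuclideanSpace ℝ (Fin d)) :=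
  {x | ∀ i ∈ I, x + i ∈ J}

/-- Inner morphological boundary `∂⁻_I J = J \ (J ⊖ I)`. -/
def innerBd {d : ℕ} (J I : Set (EuclideanSpace ℝ (Fin d))) : Set (EuclideanSpace ℝ (Fin d)) :=
  J \ erode J I

/-- Outer morphological boundary `∂⁺_I J = (J ⊕ I) \ J`. -/
def outerBd {d : ℕ} (J I : Set (EuclideanSpace ℝ (Fin d))) : Set (EuclideanSpace ℝ (Fin d)) :=
  (J + I) \ J

/-- Coordinates are bounded by the norm in Euclidean space. -/
lemma abs_coord_le_norm' {d : ℕ} (x : EuclideanSpace ℝ (Fin d)) (i : Fin d) :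
    |x i| ≤ ‖x‖ := by
  rw [EuclideanSpace.norm_eq]
  have h1 : |x i| = Real.sqrt (|x i| ^ 2) := by
    rw [Real.sqrt_sq (abs_nonneg _)]
  rw [h1]
  apply Real.sqrt_le_sqrt
  exact Finset.single_le_sum (f := fun j => |x j| ^ 2)
    (fun j _ => by positivity) (Finset.mem_univ i)

/-- Lattice points in a bounded set form a finite set. -/
lemma lattice_inter_finite {d : ℕ} {s : Set (EuclideanSpace ℝ (Fin d))}
    (hs : Bornology.IsBounded s) : (s ∩ {u | IsLatticePt u}).Finite := by
  obtain ⟨R, hR⟩ := hs.subset_closedBall 0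
  have hco : ∀ x ∈ s ∩ {u | IsLatticePt u}, ∀ i, ((round (x i) : ℤ) : ℝ) = x i := by
    rintro x ⟨-, hx⟩ i
    obtain ⟨n, hn⟩ := hx i
    rw [hn, round_intCast]
  have hbd : ∀ x ∈ s ∩ {u | IsLatticePt u}, ∀ i, |x i| ≤ R := by
    rintro x ⟨hxs, -⟩ i
    have := hR hxs
    rw [Metric.mem_closedBall, dist_zero_right] at this
    exact (abs_coord_le_norm' x i).trans this
  apply Set.Finite.of_finite_image (f := fun x => fun i => round (x i))
  · apply Set.Finite.subset (Set.Finite.pi (fun i : Fin d => Set.finite_Icc (-⌈R⌉) ⌈R⌉))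
    rintro v ⟨x, hx, rfl⟩
    intro i _
    simp only [Set.mem_Icc]
    have h1 : |((round (x i) : ℤ) : ℝ)| ≤ R := by rw [hco x hx i]; exact hbd x hx i
    have h2 : ((|round (x i)| : ℤ) : ℝ) ≤ (⌈R⌉ : ℝ) := by
      push_cast
      exact h1.trans (Int.le_ceil R)
    have h3 : |round (x i)| ≤ ⌈R⌉ := by exact_mod_cast h2
    exact abs_le.mp h3
  · rintro x hx y hy hxy
    have : ∀ i, x i = y i := by
      intro i
      have h := congrFun hxy i
      rw [← hco x hx i, ← hco y hy i]
      simp only at h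
      rw [h]
    exact WithLp.ofLp_injective _ (funext this)

theorem stmt2 {d : ℕ} (J I : Set (EuclideanSpace ℝ (Fin d)))
    (SJ : Set (EuclideanSpace ℝ (Fin d))) (hSJ : SJ.Finite) (hJ : J = convexHull ℝ SJ)
    (SI : Set (EuclideanSpace ℝ (Fin d))) (hSI : SI.Finite) (hI : I = convexHull ℝ SI)
    (hIlat : ∀ v ∈ Set.extremePoints ℝ I, IsLatticePt v)
    (hI0 : (0 : EuclideanSpace ℝ (Fin d)) ∈ I) :
    (innerBd J I ∩ {u | IsLatticePt u}).ncard ≤ (outerBd J I ∩ {u | IsLatticePt u}).ncard := by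
  classical
  subst hJ
  subst hI
  set J : Set (EuclideanSpace ℝ (Fin d)) := convexHull ℝ SJ with hJ
  set I : Set (EuclideanSpace ℝ (Fin d)) := convexHull ℝ SI with hI
  have hJcomp : IsCompact J := hSJ.isCompact_convexHull ℝ
  have hJconv : Convex ℝ J := convex_convexHull ℝ SJ
  have hIcomp : IsCompact I := hSI.isCompact_convexHull ℝ
  by_cases hJne : J.Nonempty
  swap
  · rw [Set.not_nonempty_iff_eq_empty] at hJne
    simp [innerBd, hJne]
  -- extreme lattice maximizers for each direction
  have hmax : ∀ N : EuclideanSpace ℝ (Fin d) →L[ℝ] ℝ, ∃ v, v ∈ Set.extremePoints ℝ I ∧ ∀ i ∈ I, N i ≤ N v := by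
    intro N
    obtain ⟨z, hzI, hz⟩ := hIcomp.exists_isMaxOn ⟨0, hI0⟩ N.continuous.continuousOn
    have hexp : IsExposed ℝ I {y ∈ I | ∀ w ∈ I, N w ≤ N y} := fun _ => ⟨N, rfl⟩
    obtain ⟨v, hv⟩ := (hexp.isCompact hIcomp).extremePoints_nonempty ⟨z, hzI, hz⟩
    exact ⟨v, hexp.isExtreme.extremePoints_subset_extremePoints hv, hv.1.2⟩
  choose u hu_ex hu_max using hmax
  have huI : ∀ N, u N ∈ I := fun N => extremePoints_subset (hu_ex N)
  have hulat : ∀ N, IsLatticePt (u N) := fun N => hIlat _ (hu_ex N)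
  -- support bound
  have hJsupp : ∀ (N : EuclideanSpace ℝ (Fin d) →L[ℝ] ℝ), ∀ y ∈ J, N y ≤ sSup (N '' J) := fun N y hy =>
    le_csSup (hJcomp.image N.continuous).bddAbove ⟨y, hy, rfl⟩
  -- violation sets
  set V : EuclideanSpace ℝ (Fin d) → Set (EuclideanSpace ℝ (Fin d) →L[ℝ] ℝ) := fun x => {N | sSup (N '' J) < N x + N (u N)} with hV
  have hVne : ∀ x ∈ innerBd J I, (V x).Nonempty := by
    rintro x ⟨hxJ, hxe⟩
    simp only [erode, Set.mem_setOf_eq, not_forall] at hxe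
    obtain ⟨i, hiI, hxi⟩ := hxe
    obtain ⟨N, r, hN, hr⟩ := geometric_hahn_banach_closed_point hJconv hJcomp.isClosed hxi
    refine ⟨N, ?_⟩
    have hsup : sSup (N '' J) ≤ r :=
      csSup_le (hJne.image N) (by rintro b ⟨a, ha, rfl⟩; exact (hN a ha).le)
    have : r < N x + N i := by rw [← map_add]; exact hr
    have : r < N x + N (u N) := this.trans_le (by linarith [hu_max N i hiI])
    exact hsup.trans_lt this
  -- well-order the directions, pick least violated direction
  let wf : WellFounded (WellOrderingRel : (EuclideanSpace ℝ (Fin d) →L[ℝ] ℝ) → (EuclideanSpace ℝ (Fin d) →L[ℝ] ℝ) → Prop) :=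
    IsWellFounded.wf
  set Nx : EuclideanSpace ℝ (Fin d) → (EuclideanSpace ℝ (Fin d) →L[ℝ] ℝ) := fun x => if h : (V x).Nonempty then wf.min (V x) h else 0
    with hNx
  have hNmem : ∀ x ∈ innerBd J I, Nx x ∈ V x := by
    intro x hx
    rw [hNx]
    simp only [dif_pos (hVne x hx)]
    exact wf.min_mem (V x) (hVne x hx)
  have hNmin : ∀ x ∈ innerBd J I, ∀ N', WellOrderingRel N' (Nx x) → N' ∉ V x := by
    intro x hx N' hlt hmem
    rw [hNx] at hlt
    simp only [dif_pos (hVne x hx)] at hlt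
    exact wf.not_lt_min (V x) hmem hlt
  set f : EuclideanSpace ℝ (Fin d) → EuclideanSpace ℝ (Fin d) := fun x => x + u (Nx x) with hf
  have hnotJ : ∀ x ∈ innerBd J I, f x ∉ J := by
    intro x hx hfJ
    have h1 := hNmem x hx
    rw [hV] at h1
    have h2 := hJsupp (Nx x) _ hfJ
    rw [hf] at h2
    simp only [map_add] at h2
    exact absurd h2 (not_le.mpr h1)
  -- injectivity key
  have hkey : ∀ x ∈ innerBd J I, ∀ x' ∈ innerBd J I, f x = f x' →
      WellOrderingRel (Nx x) (Nx x') → False := by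
    intro x hx x' hx' hfe hlt
    set N := Nx x
    have h1 : N ∈ V x := hNmem x hx
    have h2 : N ∉ V x' := hNmin x' hx' N hlt
    rw [hV, Set.mem_setOf_eq, not_lt] at h2
    rw [hV, Set.mem_setOf_eq] at h1
    have h3 : N x + N (u N) = N x' + N (u (Nx x')) := by
      have := congrArg N hfe
      simpa only [hf, map_add] using this
    have h4 : N (u (Nx x')) ≤ N (u N) := hu_max N _ (huI (Nx x'))
    linarith
  have hinj : Set.InjOn f (innerBd J I ∩ {u | IsLatticePt u}) := by
    rintro x ⟨hx, -⟩ x' ⟨hx', -⟩ hfe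
    rcases eq_or_ne (Nx x) (Nx x') with h | h
    · have hfe' : x + u (Nx x) = x' + u (Nx x') := hfe
      rw [← h] at hfe'
      exact add_right_cancel hfe'
    · rcases (@trichotomous _ WellOrderingRel _ (Nx x) (Nx x')) with h1 | h1 | h1
      · exact absurd h1 (fun h1 => hkey x hx x' hx' hfe h1)
      · exact absurd h1 h
      · exact absurd h1 (fun h1 => hkey x' hx' x hx hfe.symm h1)
  have hmaps : ∀ x ∈ innerBd J I ∩ {u | IsLatticePt u},
      f x ∈ outerBd J I ∩ {u | IsLatticePt u} := by
    rintro x ⟨hx, hxl⟩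
    refine ⟨⟨Set.add_mem_add hx.1 (huI (Nx x)), hnotJ x hx⟩, ?_⟩
    intro i
    obtain ⟨n, hn⟩ := hxl i
    obtain ⟨m, hm⟩ := hulat (Nx x) i
    refine ⟨n + m, ?_⟩
    have : f x i = x i + u (Nx x) i := rfl
    rw [this, hn, hm]
    push_cast
    ring
  have hfin : (outerBd J I ∩ {u | IsLatticePt u}).Finite := by
    apply Set.Finite.subset (lattice_inter_finite (s := J + I) (hJcomp.add hIcomp).isBounded)
    rintro y ⟨⟨hy, -⟩, hyl⟩
    exact ⟨hy, hyl⟩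
  exact Set.ncard_le_ncard_of_injOn f hmaps hinj hfin
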